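/- Free groups of finite rank are Hopfian: every surjective endomorphism of a finitely generated free group is an isomorphism. -/

import Mathlib

open Function

namespace FreeGroupHopfAux

variable {α : Type*} [DecidableEq α]

/-- No adjacent cancelling pair in a reduced word. -/
lemma no_cancel {L : List (α × Bool)} (hred : FreeGroup.reduce L = L) {s : ℕ}
    (h : s + 1 < L.length) (i : α) (b : Bool)
    (h1 : L[s] = (i, b)) (h2 : L[s + 1] = (i, !b)) : False := by
  apply FreeGroup.reduce.not (L₁ := L) (L₂ := L.take s) (L₃ := L.drop (s + 2))
    (x := i) (b := b)
  rw [hred]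
  conv_lhs => rw [← List.take_append_drop s L]
  congr 1
  rw [List.drop_eq_getElem_cons (by omega : s < L.length),
    List.drop_eq_getElem_cons (by omega : s + 1 < L.length)]
  simp [h1, h2]

/-- The partial "arrow" relation for generator `i` on `Fin (L.length + 1)`. -/
def StepRel (L : List (α × Bool)) (i : α) (a b : Fin (L.length + 1)) : Prop :=
  ∃ s : ℕ, ∃ hs : s < L.length,
    (L[s]'hs = (i, true) ∧ a.val = L.length - 1 - s ∧ b.val = L.length - s) ∨
    (L[s]'hs = (i, false) ∧ a.val = L.length - s ∧ b.val = L.length - 1 - s)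

lemma stepRel_functional {L : List (α × Bool)} (hred : FreeGroup.reduce L = L)
    {i : α} {a b b' : Fin (L.length + 1)}
    (h : StepRel L i a b) (h' : StepRel L i a b') : b = b' := by
  obtain ⟨s, hs, h⟩ := h
  obtain ⟨t, ht, h'⟩ := h'
  rcases h with ⟨hL, ha, hb⟩ | ⟨hL, ha, hb⟩ <;> rcases h' with ⟨hL', ha', hb'⟩ | ⟨hL', ha', hb'⟩
  · have : s = t := by omega
    subst this; exact Fin.ext (by omega)
  · -- plus at s, minus at t, same source: t = s + 1, cancels
    have hts : t = s + 1 := by omega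
    subst hts
    exact (no_cancel hred (by omega) i true hL (by simpa using hL')).elim
  · have hst : s = t + 1 := by omega
    subst hst
    exact (no_cancel hred (by omega) i true hL' (by simpa using hL)).elim
  · have : s = t := by omega
    subst this; exact Fin.ext (by omega)

lemma stepRel_injective {L : List (α × Bool)} (hred : FreeGroup.reduce L = L)
    {i : α} {a a' b : Fin (L.length + 1)}
    (h : StepRel L i a b) (h' : StepRel L i a' b) : a = a' := by
  obtain ⟨s, hs, h⟩ := h
  obtain ⟨t, ht, h'⟩ := h'
  rcases h with ⟨hL, ha, hb⟩ | ⟨hL, ha, hb⟩ <;> rcases h' with ⟨hL', ha', hb'⟩ | ⟨hL', ha', hb'⟩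
  · have : s = t := by omega
    subst this; exact Fin.ext (by omega)
  · -- plus at s (target n - s), minus at t (target n-1-t): s = t + 1, pattern (i,false)(i,true)
    have hst : s = t + 1 := by omega
    subst hst
    exact (no_cancel hred (by omega) i false hL' (by simpa using hL)).elim
  · have hts : t = s + 1 := by omega
    subst hts
    exact (no_cancel hred (by omega) i false hL (by simpa using hL')).elim
  · have : s = t := by omega
    subst this; exact Fin.ext (by omega)

/-- Extend the partial injection `StepRel L i` to a permutation. -/
noncomputable def perm (L : List (α × Bool)) (hred : FreeGroup.reduce L = L) (i : α) :
    Equiv.Perm (Fin (L.length + 1)) := by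
  classical
  exact Equiv.extendSubtype (p := fun a => ∃ b, StepRel L i a b)
    (q := fun b => ∃ a, StepRel L i a b)
    (Equiv.ofBijective
      (fun a => ⟨a.2.choose, ⟨a.1, a.2.choose_spec⟩⟩)
      (by
        constructor
        · rintro ⟨a, ha⟩ ⟨a', ha'⟩ hEq
          simp only [Subtype.mk.injEq] at hEq
          have h1 := ha.choose_spec
          have h2 := ha'.choose_spec
          rw [hEq] at h1
          exact Subtype.ext (stepRel_injective hred h1 h2)
        · rintro ⟨b, a, hab⟩
          refine ⟨⟨a, ⟨b, hab⟩⟩, Subtype.ext ?_⟩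
          exact stepRel_functional hred (⟨b, hab⟩ : ∃ b', StepRel L i a b').choose_spec hab))

lemma perm_apply {L : List (α × Bool)} (hred : FreeGroup.reduce L = L) {i : α}
    {a b : Fin (L.length + 1)} (h : StepRel L i a b) : perm L hred i a = b := by
  classical
  unfold perm
  rw [Equiv.extendSubtype_apply_of_mem _ a ⟨b, h⟩]
  exact stepRel_functional hred (⟨b, h⟩ : ∃ b', StepRel L i a b').choose_spec h

lemma perm_inv_apply {L : List (α × Bool)} (hred : FreeGroup.reduce L = L) {i : α}
    {a b : Fin (L.length + 1)} (h : StepRel L i a b) : (perm L hred i)⁻¹ b = a := by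
  rw [← perm_apply hred h]
  exact Equiv.symm_apply_apply _ _

/-- Main computation: the product of letter-permutations over `L.drop s` sends `0` to
`L.length - s`. -/
lemma prod_drop (L : List (α × Bool)) (hred : FreeGroup.reduce L = L) :
    ∀ m s, s ≤ L.length → L.length - s = m →
    (((L.drop s).map fun x => cond x.2 (perm L hred x.1) (perm L hred x.1)⁻¹).prod)
        ⟨0, by omega⟩ = ⟨L.length - s, by omega⟩ := by
  intro m
  induction m with
  | zero =>
    intro s hs hm
    have : s = L.length := by omega
    subst this
    simp [List.drop_length]
  | succ m ih =>
    intro s hs hm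
    have hsl : s < L.length := by omega
    rw [List.drop_eq_getElem_cons hsl]
    rw [List.map_cons, List.prod_cons, Equiv.Perm.mul_apply,
      ih (s + 1) (by omega) (by omega)]
    cases hb : (L[s]'hsl).2
    · -- letter (i, false): acts as (perm i)⁻¹, must send (n - s - 1) to (n - s)
      simp only [hb, cond_false]
      apply perm_inv_apply hred
      exact ⟨s, hsl, Or.inr ⟨Prod.ext rfl hb, by simp, by simp; omega⟩⟩
    · simp only [hb, cond_true]
      apply perm_apply hred
      exact ⟨s, hsl, Or.inl ⟨Prod.ext rfl hb, by simp; omega, by simp⟩⟩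

/-- Free groups are residually finite (enough for our purposes). -/
lemma exists_perm_hom (w : FreeGroup α) (hw : w ≠ 1) :
    ∃ (n : ℕ) (ψ : FreeGroup α →* Equiv.Perm (Fin n)), ψ w ≠ 1 := by
  set L := w.toWord with hLdef
  have hred : FreeGroup.reduce L = L := w.reduce_toWord
  have hlen : 0 < L.length := by
    rcases Nat.eq_zero_or_pos L.length with h | h
    · exact absurd (FreeGroup.toWord_eq_nil_iff.mp (List.length_eq_zero_iff.mp h)) hw
    · exact h
  refine ⟨L.length + 1, FreeGroup.lift (perm L hred), fun hψ => ?_⟩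
  have hper := prod_drop L hred L.length 0 (by omega) (by omega)
  rw [List.drop_zero] at hper
  have hmk : FreeGroup.mk L = w := w.mk_toWord
  have : (FreeGroup.lift (perm L hred)) w ⟨0, by omega⟩ = ⟨L.length - 0, by omega⟩ := by
    have e : (FreeGroup.lift (perm L hred)) w = (FreeGroup.lift (perm L hred)) (FreeGroup.mk L) :=
      congrArg _ hmk.symm
    rw [e, FreeGroup.lift_mk]
    exact hper
  rw [hψ] at this
  simp only [Equiv.Perm.one_apply, Fin.mk.injEq] at this
  omega

end FreeGroupHopfAux

/-- Finitely generated free groups are Hopfian. -/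
theorem freeGroup_hopfian (k : ℕ)
    (φ : FreeGroup (Fin k) →* FreeGroup (Fin k)) (hφ : Function.Surjective φ) :
    Function.Bijective φ := by
  refine ⟨?_, hφ⟩
  rw [injective_iff_map_eq_one]
  intro w hw
  by_contra hne
  obtain ⟨n, ψ, hψ⟩ := FreeGroupHopfAux.exists_perm_hom w hne
  -- The set of homs to a finite group is finite; precomposition with φ is injective, hence
  -- surjective, so ψ factors through φ, giving ψ w = 1.
  have hfin : Finite (FreeGroup (Fin k) →* Equiv.Perm (Fin n)) :=
    Finite.of_surjective (FreeGroup.lift (α := Fin k) (β := Equiv.Perm (Fin n)))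
      (Equiv.surjective _)
  have hinj : Function.Injective
      (fun ρ : FreeGroup (Fin k) →* Equiv.Perm (Fin n) => ρ.comp φ) := by
    intro ρ₁ ρ₂ h
    exact (MonoidHom.cancel_right hφ).mp h
  obtain ⟨ψ', hψ'⟩ := (Finite.injective_iff_surjective.mp hinj) ψ
  apply hψ
  have h2 : ψ'.comp φ = ψ := hψ'
  calc ψ w = (ψ'.comp φ) w := by rw [h2]
    _ = ψ' (φ w) := rfl
    _ = 1 := by rw [hw, map_one]
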